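/- Let $p_\theta$ and $p_{\mathrm{ref}}$ be two reverse-factorized trajectory distributions on a finite state space with strictly positive transition probabilities, and define the trajectory reward $r_\theta(x_{0:T}) := \beta \log \frac{p_\theta(x_{0:T})}{p_{\mathrm{ref}}(x_{0:T})}$ and, for each $t$, $Q_\theta^t(x_{t-1}, x_{t:T}) := \sum_{i=t}^T \beta \log \frac{p_\theta(x_{i-1}\mid x_i)}{p_{\mathrm{ref}}(x_{i-1}\mid x_i)}$. Then $Q_\theta^t(x_{t-1}, x_{t:T}) = \beta \log \mathbb{E}_{p_{\mathrm{ref}}(x_{0:t-2}\mid x_{t-1})}\left[ e^{r_\theta(x_{0:T})/\beta} \right]$, i.e., $Q^t$ equals $\beta$ times the log of the conditional expectation under $p_{\mathrm{ref}}$ of the exponentiated (scaled) trajectory reward given the suffix $x_{t-1:T}$. -/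

import Mathlib

open Finset

lemma prod_split {T m : ℕ} (hm : m < T) (f : Fin T → ℝ) :
    (∏ i : Fin T, if (i:ℕ) < m + 1 then f i else 1)
      = f ⟨m, hm⟩ * ∏ i : Fin T, (if (i:ℕ) < m then f i else 1) := by
  have h : ∀ i : Fin T, (if (i:ℕ) < m + 1 then f i else 1)
      = (if i = ⟨m, hm⟩ then f i else 1) * (if (i:ℕ) < m then f i else 1) := by
    intro i
    by_cases h1 : (i:ℕ) < m
    · rw [if_pos (by omega), if_neg (by simp [Fin.ext_iff]; omega), if_pos h1, one_mul]
    · by_cases h2 : (i:ℕ) = m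
      · rw [if_pos (by omega), if_pos (by simp [Fin.ext_iff, h2]), if_neg h1, mul_one]
      · rw [if_neg (by omega), if_neg (by simp [Fin.ext_iff]; omega), if_neg h1, mul_one]
  rw [Finset.prod_congr rfl (fun i _ => h i), Finset.prod_mul_distrib,
    Finset.prod_ite_eq' Finset.univ (⟨m, hm⟩ : Fin T) f]
  simp

lemma key {X : Type*} [Fintype X] [DecidableEq X] (T : ℕ) (k : X → X → ℝ)
    (hksum : ∀ a, ∑ b, k a b = 1) :
    ∀ m, m ≤ T → ∀ x : Fin (T+1) → X,
    (∑ y : Fin (T + 1) → X,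
      if ∀ i : Fin (T+1), m ≤ (i:ℕ) → y i = x i then
        ∏ i : Fin T, (if (i:ℕ) < m then k (y i.succ) (y i.castSucc) else 1) else 0) = 1 := by
  intro m
  induction m with
  | zero =>
    intro _ x
    have h : ∀ y : Fin (T+1) → X, (if ∀ i : Fin (T+1), 0 ≤ (i:ℕ) → y i = x i then
        ∏ i : Fin T, (if (i:ℕ) < 0 then k (y i.succ) (y i.castSucc) else 1) else 0)
        = if y = x then 1 else 0 := by
      intro y
      simp [funext_iff]
    rw [Finset.sum_congr rfl (fun y _ => h y)]
    simp
  | succ m ih =>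
    intro hm x
    have hmT : m < T := hm
    set j : Fin T := ⟨m, hmT⟩ with hj
    have hjc : ((j.castSucc : Fin (T+1)) : ℕ) = m := rfl
    have hjs : ((j.succ : Fin (T+1)) : ℕ) = m + 1 := rfl
    have claim : ∀ (c : X) (y : Fin (T+1) → X),
        (if y j.castSucc = c then
          (if ∀ i : Fin (T+1), m + 1 ≤ (i:ℕ) → y i = x i then
            ∏ i : Fin T, (if (i:ℕ) < m + 1 then k (y i.succ) (y i.castSucc) else 1) else 0)
          else 0)
        = k (x j.succ) c *
          (if ∀ i : Fin (T+1), m ≤ (i:ℕ) → y i = Function.update x j.castSucc c i then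
            ∏ i : Fin T, (if (i:ℕ) < m then k (y i.succ) (y i.castSucc) else 1) else 0) := by
      intro c y
      by_cases h : ∀ i : Fin (T+1), m ≤ (i:ℕ) → y i = Function.update x j.castSucc c i
      · have hyc : y j.castSucc = c := by
          have := h j.castSucc (by rw [hjc])
          rwa [Function.update_self] at this
        have hsuf : ∀ i : Fin (T+1), m + 1 ≤ (i:ℕ) → y i = x i := by
          intro i hi
          have hne : i ≠ j.castSucc := by
            intro he; rw [he] at hi; omega
          have := h i (by omega)
          rwa [Function.update_of_ne hne] at this
        rw [if_pos hyc, if_pos hsuf, if_pos h]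
        rw [prod_split hmT]
        have h1 : y j.succ = x j.succ := hsuf j.succ (by omega)
        rw [h1, hyc]
      · rw [if_neg h, mul_zero]
        by_cases h1 : y j.castSucc = c
        · by_cases h2 : ∀ i : Fin (T+1), m + 1 ≤ (i:ℕ) → y i = x i
          · exfalso
            apply h
            intro i hi
            by_cases hie : i = j.castSucc
            · rw [hie, Function.update_self]; exact h1
            · rw [Function.update_of_ne hie]
              apply h2
              have : (i:ℕ) ≠ m := by
                intro he; apply hie; apply Fin.ext; rw [he, hjc]
              omega
          · rw [if_pos h1, if_neg h2]
        · rw [if_neg h1]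
    calc (∑ y : Fin (T + 1) → X,
        if ∀ i : Fin (T+1), m + 1 ≤ (i:ℕ) → y i = x i then
          ∏ i : Fin T, (if (i:ℕ) < m + 1 then k (y i.succ) (y i.castSucc) else 1) else 0)
        = ∑ y : Fin (T + 1) → X, ∑ c : X,
          (if y j.castSucc = c then
            (if ∀ i : Fin (T+1), m + 1 ≤ (i:ℕ) → y i = x i then
              ∏ i : Fin T, (if (i:ℕ) < m + 1 then k (y i.succ) (y i.castSucc) else 1) else 0)
            else 0) := by
          apply Finset.sum_congr rfl
          intro y _
          rw [Finset.sum_ite_eq Finset.univ (y j.castSucc)]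
          simp
      _ = ∑ c : X, ∑ y : Fin (T + 1) → X,
          (if y j.castSucc = c then
            (if ∀ i : Fin (T+1), m + 1 ≤ (i:ℕ) → y i = x i then
              ∏ i : Fin T, (if (i:ℕ) < m + 1 then k (y i.succ) (y i.castSucc) else 1) else 0)
            else 0) := Finset.sum_comm
      _ = ∑ c : X, k (x j.succ) c * (∑ y : Fin (T + 1) → X,
          (if ∀ i : Fin (T+1), m ≤ (i:ℕ) → y i = Function.update x j.castSucc c i then
            ∏ i : Fin T, (if (i:ℕ) < m then k (y i.succ) (y i.castSucc) else 1) else 0)) := by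
          apply Finset.sum_congr rfl
          intro c _
          rw [Finset.mul_sum]
          exact Finset.sum_congr rfl (fun y _ => claim c y)
      _ = ∑ c : X, k (x j.succ) c * 1 := by
          apply Finset.sum_congr rfl
          intro c _
          rw [ih (le_of_lt hmT) (Function.update x j.castSucc c)]
      _ = 1 := by simp [hksum]


/-- `Q_θ^t` equals `β` times the log of the conditional expectation (under
`p_ref`, conditioned on the suffix `x_{t-1:T}`) of the exponentiated scaled trajectory
reward `exp(r_θ(x_{0:T})/β)`.  Trajectories are maps `Fin (T+1) → X`; the trajectory
distribution factorizes as `p(x_T) ∏_{i=1}^T k(x_{i-1} | x_i)`, and the conditional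
distribution of the prefix `x_{0:t-2}` given `x_{t-1:T}` has weight
`∏_{i=1}^{t-1} kref(x_{i-1}|x_i)`. -/
theorem stmt_1 {X : Type*} [Fintype X] [DecidableEq X] (T : ℕ) (β : ℝ) (hβ : 0 < β)
    (pT : X → ℝ) (kθ kref : X → X → ℝ)
    (hpT : ∀ a, 0 < pT a) (hkθ : ∀ a b, 0 < kθ a b) (hkref : ∀ a b, 0 < kref a b)
    (hpTsum : ∑ a, pT a = 1)
    (hkθsum : ∀ a, ∑ b, kθ a b = 1) (hkrefsum : ∀ a, ∑ b, kref a b = 1)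
    (t : ℕ) (ht1 : 1 ≤ t) (ht2 : t ≤ T)
    (x : Fin (T + 1) → X) :
    (∑ i : Fin T, if t ≤ (i : ℕ) + 1 then
        β * Real.log (kθ (x i.succ) (x i.castSucc) / kref (x i.succ) (x i.castSucc))
      else 0) =
    β * Real.log (∑ y : Fin (T + 1) → X,
      if ∀ i : Fin (T + 1), t - 1 ≤ (i : ℕ) → y i = x i then
        (∏ i : Fin T, if (i : ℕ) < t - 1 then kref (y i.succ) (y i.castSucc) else 1) *
          Real.exp ((β * Real.log
            ((pT (y (Fin.last T)) * ∏ i : Fin T, kθ (y i.succ) (y i.castSucc)) /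
             (pT (y (Fin.last T)) * ∏ i : Fin T, kref (y i.succ) (y i.castSucc)))) / β)
      else 0) := by
  obtain ⟨m, rfl⟩ : ∃ m, t = m + 1 := ⟨t - 1, by omega⟩
  simp only [Nat.add_sub_cancel]
  set C : ℝ := ∏ i : Fin T, (if m ≤ (i:ℕ) then
      kθ (x i.succ) (x i.castSucc) / kref (x i.succ) (x i.castSucc) else 1) with hC
  have hterm : ∀ y : Fin (T+1) → X,
      (if ∀ i : Fin (T + 1), m ≤ (i : ℕ) → y i = x i then
        (∏ i : Fin T, if (i : ℕ) < m then kref (y i.succ) (y i.castSucc) else 1) *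
          Real.exp ((β * Real.log
            ((pT (y (Fin.last T)) * ∏ i : Fin T, kθ (y i.succ) (y i.castSucc)) /
             (pT (y (Fin.last T)) * ∏ i : Fin T, kref (y i.succ) (y i.castSucc)))) / β)
      else 0)
      = C * (if ∀ i : Fin (T+1), m ≤ (i:ℕ) → y i = x i then
          ∏ i : Fin T, (if (i:ℕ) < m then kθ (y i.succ) (y i.castSucc) else 1) else 0) := by
    intro y
    by_cases h : ∀ i : Fin (T+1), m ≤ (i:ℕ) → y i = x i
    · rw [if_pos h, if_pos h]
      have hkθp : 0 < ∏ i : Fin T, kθ (y i.succ) (y i.castSucc) :=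
        Finset.prod_pos (fun i _ => hkθ _ _)
      have hkrefp : 0 < ∏ i : Fin T, kref (y i.succ) (y i.castSucc) :=
        Finset.prod_pos (fun i _ => hkref _ _)
      have hRpos : 0 < (pT (y (Fin.last T)) * ∏ i : Fin T, kθ (y i.succ) (y i.castSucc)) /
          (pT (y (Fin.last T)) * ∏ i : Fin T, kref (y i.succ) (y i.castSucc)) :=
        div_pos (mul_pos (hpT _) hkθp) (mul_pos (hpT _) hkrefp)
      rw [mul_div_cancel_left₀ _ (ne_of_gt hβ), Real.exp_log hRpos,
        mul_div_mul_left _ _ (ne_of_gt (hpT _)), ← Finset.prod_div_distrib,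
        ← Finset.prod_mul_distrib, hC, ← Finset.prod_mul_distrib]
      apply Finset.prod_congr rfl
      intro i _
      by_cases hi : (i:ℕ) < m
      · rw [if_pos hi, if_neg (by omega), if_pos hi, one_mul, mul_comm,
          div_mul_cancel₀ _ (ne_of_gt (hkref _ _))]
      · have h1 : y i.succ = x i.succ := h i.succ (by simp [Fin.val_succ]; omega)
        have h2 : y i.castSucc = x i.castSucc := h i.castSucc (by simp; omega)
        rw [if_neg hi, if_pos (by omega), if_neg hi, one_mul, mul_one, h1, h2]
    · rw [if_neg h, if_neg h, mul_zero]
  rw [Finset.sum_congr rfl (fun y _ => hterm y), ← Finset.mul_sum,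
    key T kθ hkθsum m (by omega) x, mul_one]
  have hlog : Real.log C = ∑ i : Fin T, (if m ≤ (i:ℕ) then
      Real.log (kθ (x i.succ) (x i.castSucc) / kref (x i.succ) (x i.castSucc)) else 0) := by
    rw [hC, Real.log_prod]
    · apply Finset.sum_congr rfl
      intro i _
      split_ifs <;> simp
    · intro i _
      split_ifs with hcond
      · exact ne_of_gt (div_pos (hkθ _ _) (hkref _ _))
      · norm_num
  rw [hlog, Finset.mul_sum]
  apply Finset.sum_congr rfl
  intro i _
  rw [mul_ite, mul_zero]
  simp only [Nat.add_le_add_iff_right]
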